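/- Let aᵢⱼ ≥ 0 (1 ≤ i ≠ j ≤ N) be weights such that the associated weighted digraph is strongly connected, and let L be the associated Laplacian matrix. Then there exists a vector r ∈ ℝ^N with all entries rᵢ > 0 such that rᵀL = 0; moreover, setting R = diag(r₁, …, r_N), the matrix L̂ := RL + LᵀR is symmetric, has L̂ᵢⱼ ≤ 0 for all i ≠ j, satisfies L̂·𝟏 = 0, is positive semidefinite, and its kernel equals the span of 𝟏 (i.e., L̂ is the Laplacian matrix of a connected undirected weighted graph). -/

import Mathlib

open Matrix

/-- For a strongly connected weighted digraph with Laplacian `L`,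
there is a positive vector `r` with `rᵀL = 0`, and `L̂ = RL + LᵀR`
(with `R = diag r`) is the Laplacian of a connected undirected weighted graph:
it is symmetric, has nonpositive off-diagonal entries, annihilates the all-ones
vector, is positive semidefinite, and its kernel is spanned by the all-ones
vector. -/
theorem strongly_connected_left_eigenvector_and_symmetrized_laplacian
    (N : ℕ) (hN : 1 ≤ N)
    (a : Fin N → Fin N → ℝ)
    (ha : ∀ i j, i ≠ j → 0 ≤ a i j)
    (hsc : ∀ i j : Fin N, Relation.ReflTransGen (fun u v : Fin N => 0 < a v u) i j)
    (L : Matrix (Fin N) (Fin N) ℝ)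
    (hLdiag : ∀ i, L i i = ∑ j ∈ Finset.univ.erase i, a i j)
    (hLoff : ∀ i j, i ≠ j → L i j = -(a i j)) :
    ∃ r : Fin N → ℝ, (∀ i, 0 < r i) ∧ Matrix.vecMul r L = 0 ∧
      (Matrix.diagonal r * L + Lᵀ * Matrix.diagonal r).IsSymm ∧
      (∀ i j, i ≠ j → (Matrix.diagonal r * L + Lᵀ * Matrix.diagonal r) i j ≤ 0) ∧
      (Matrix.diagonal r * L + Lᵀ * Matrix.diagonal r).mulVec (fun _ => (1 : ℝ)) = 0 ∧
      (Matrix.diagonal r * L + Lᵀ * Matrix.diagonal r).PosSemidef ∧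
      (∀ x : Fin N → ℝ,
        (Matrix.diagonal r * L + Lᵀ * Matrix.diagonal r).mulVec x = 0 ↔
          ∃ c : ℝ, x = fun _ => c) := by
  classical
  -- Row sums of `L` vanish.
  have hrow : ∀ i, ∑ j, L i j = 0 := by
    intro i
    rw [← Finset.add_sum_erase Finset.univ (fun j => L i j) (Finset.mem_univ i), hLdiag i,
      Finset.sum_congr rfl fun j hj => hLoff i j (Finset.ne_of_mem_erase hj).symm]
    simp
  have hL1 : L.mulVec (fun _ => (1 : ℝ)) = 0 := by
    funext i
    simpa [Matrix.mulVec, dotProduct] using hrow i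
  have hdetL : L.det = 0 := by
    rw [← Matrix.exists_mulVec_eq_zero_iff]
    refine ⟨fun _ => 1, ?_, hL1⟩
    intro h
    simpa using congrFun h ⟨0, hN⟩
  obtain ⟨r₀, hr₀ne, hr₀⟩ : ∃ v ≠ 0, Lᵀ.mulVec v = 0 := by
    rw [Matrix.exists_mulVec_eq_zero_iff, Matrix.det_transpose]
    exact hdetL
  set s : Fin N → ℝ := fun i => |r₀ i| with hsdef
  have hs0 : ∀ i, 0 ≤ s i := fun i => abs_nonneg _
  have hLdiag0 : ∀ i, 0 ≤ L i i := by
    intro i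
    rw [hLdiag]
    exact Finset.sum_nonneg fun j hj => ha i j (Finset.ne_of_mem_erase hj).symm
  -- splitting a column sum
  have hsplit : ∀ (v : Fin N → ℝ) (j), ∑ i, L i j * v i
      = L j j * v j - ∑ i ∈ Finset.univ.erase j, a i j * v i := by
    intro v j
    rw [← Finset.add_sum_erase Finset.univ (fun i => L i j * v i) (Finset.mem_univ j)]
    have h1 : ∑ i ∈ Finset.univ.erase j, L i j * v i
        = -∑ i ∈ Finset.univ.erase j, a i j * v i := by
      rw [← Finset.sum_neg_distrib]
      exact Finset.sum_congr rfl fun i hi => by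
        rw [hLoff i j (Finset.ne_of_mem_erase hi)]; ring
    rw [h1]; ring
  have hr₀col : ∀ j, ∑ i, L i j * r₀ i = 0 := by
    intro j
    have := congrFun hr₀ j
    simpa [Matrix.mulVec, dotProduct, Matrix.transpose_apply] using this
  have hcol : ∀ j, L j j * r₀ j = ∑ i ∈ Finset.univ.erase j, a i j * r₀ i := by
    intro j
    have h := hr₀col j
    rw [hsplit r₀ j] at h
    linarith
  have hnonpos : ∀ j, ∑ i, L i j * s i ≤ 0 := by
    intro j
    rw [hsplit s j]
    have h1 : L j j * s j = |L j j * r₀ j| := by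
      rw [abs_mul, abs_of_nonneg (hLdiag0 j)]
    have h2 : |L j j * r₀ j| ≤ ∑ i ∈ Finset.univ.erase j, a i j * s i := by
      rw [hcol j]
      calc |∑ i ∈ Finset.univ.erase j, a i j * r₀ i|
          ≤ ∑ i ∈ Finset.univ.erase j, |a i j * r₀ i| := Finset.abs_sum_le_sum_abs _ _
        _ = ∑ i ∈ Finset.univ.erase j, a i j * s i := Finset.sum_congr rfl fun i hi => by
            rw [abs_mul, abs_of_nonneg (ha i j (Finset.ne_of_mem_erase hi))]
    linarith
  have hsumzero : ∑ j, ∑ i, L i j * s i = 0 := by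
    calc ∑ j, ∑ i, L i j * s i = ∑ i, ∑ j, L i j * s i := Finset.sum_comm
      _ = ∑ i, (∑ j, L i j) * s i := by
          exact Finset.sum_congr rfl fun i _ => by rw [Finset.sum_mul]
      _ = 0 := by simp [hrow]
  have hzero : ∀ j, ∑ i, L i j * s i = 0 := by
    intro j
    exact (Finset.sum_eq_zero_iff_of_nonpos fun j _ => hnonpos j).mp hsumzero j
      (Finset.mem_univ j)
  have hkey : ∀ j, L j j * s j = ∑ i ∈ Finset.univ.erase j, a i j * s i := by
    intro j
    have h := hzero j
    rw [hsplit s j] at h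
    linarith
  -- zero entries of `s` propagate along edges
  have hprop : ∀ j, s j = 0 → ∀ k, s k = 0 := by
    intro j hj k
    have hpath := hsc j k
    induction hpath with
    | refl => exact hj
    | @tail b c hp hrel ih =>
      by_cases hcb : c = b
      · rw [hcb]; exact ih
      · have h0 : ∑ i ∈ Finset.univ.erase b, a i b * s i = 0 := by
          have h := hkey b
          rw [ih] at h
          simpa using h.symm
        have h1 := (Finset.sum_eq_zero_iff_of_nonneg fun i hi =>
          mul_nonneg (ha i b (Finset.ne_of_mem_erase hi)) (hs0 i)).mp h0 c
          (Finset.mem_erase.mpr ⟨hcb, Finset.mem_univ c⟩)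
        rcases mul_eq_zero.mp h1 with h | h
        · exact absurd h (ne_of_gt hrel)
        · exact h
  have hspos : ∀ i, 0 < s i := by
    intro i
    rcases (hs0 i).lt_or_eq with h | h
    · exact h
    · exfalso
      apply hr₀ne
      funext k
      have := hprop i h.symm k
      simpa [hsdef] using abs_eq_zero.mp this
  -- the symmetrized matrix
  set Lh : Matrix (Fin N) (Fin N) ℝ := Matrix.diagonal s * L + Lᵀ * Matrix.diagonal s
    with hLhdef
  have hE : ∀ i j, Lh i j = s i * L i j + L j i * s j := by
    intro i j
    simp [hLhdef, Matrix.add_apply, Matrix.diagonal_mul, Matrix.mul_diagonal,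
      Matrix.transpose_apply]
  have hvm : Matrix.vecMul s L = 0 := by
    funext j
    have := hzero j
    simp only [Matrix.vecMul, dotProduct, Pi.zero_apply]
    rw [Finset.sum_congr rfl fun i _ => mul_comm (s i) (L i j)]
    exact this
  have hsym : Lh.IsSymm := by
    show Lhᵀ = Lh
    ext i j
    rw [Matrix.transpose_apply, hE j i, hE i j]
    ring
  have hLhrow : ∀ i, ∑ j, Lh i j = 0 := by
    intro i
    calc ∑ j, Lh i j = ∑ j, (s i * L i j + L j i * s j) :=
          Finset.sum_congr rfl fun j _ => hE i j
      _ = s i * (∑ j, L i j) + ∑ j, L j i * s j := by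
          rw [Finset.sum_add_distrib, Finset.mul_sum]
      _ = 0 := by rw [hrow i, hzero i]; ring
  have hcomm : ∀ i j, Lh i j = Lh j i := by
    intro i j
    rw [hE i j, hE j i]; ring
  have hLhcol : ∀ j, ∑ i, Lh i j = 0 := by
    intro j
    calc ∑ i, Lh i j = ∑ i, Lh j i := Finset.sum_congr rfl fun i _ => hcomm i j
      _ = 0 := hLhrow j
  have hoff : ∀ i j, i ≠ j → Lh i j ≤ 0 := by
    intro i j hij
    rw [hE i j, hLoff i j hij, hLoff j i (Ne.symm hij)]
    nlinarith [hspos i, hspos j, ha i j hij, ha j i (Ne.symm hij)]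
  have hones : Lh.mulVec (fun _ => (1 : ℝ)) = 0 := by
    funext i
    simpa [Matrix.mulVec, dotProduct] using hLhrow i
  -- quadratic form identity
  have hQ : ∀ x : Fin N → ℝ, ∑ i, ∑ j, (-(Lh i j)) * (x i - x j) ^ 2
      = 2 * (x ⬝ᵥ Lh.mulVec x) := by
    intro x
    have hA : ∑ i, ∑ j, Lh i j * x i ^ 2 = 0 := by
      refine Finset.sum_eq_zero fun i _ => ?_
      rw [← Finset.sum_mul, hLhrow i, zero_mul]
    have hB : ∑ i, ∑ j, Lh i j * x j ^ 2 = 0 := by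
      rw [Finset.sum_comm]
      refine Finset.sum_eq_zero fun j _ => ?_
      rw [← Finset.sum_mul, hLhcol j, zero_mul]
    have hC : x ⬝ᵥ Lh.mulVec x = ∑ i, ∑ j, x i * (Lh i j * x j) := by
      simp [Matrix.mulVec, dotProduct, Finset.mul_sum]
    calc ∑ i, ∑ j, (-(Lh i j)) * (x i - x j) ^ 2
        = ∑ i, ∑ j, (2 * (x i * (Lh i j * x j)) - Lh i j * x i ^ 2 - Lh i j * x j ^ 2) := by
          refine Finset.sum_congr rfl fun i _ => Finset.sum_congr rfl fun j _ => by ring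
      _ = 2 * (∑ i, ∑ j, x i * (Lh i j * x j)) - (∑ i, ∑ j, Lh i j * x i ^ 2)
            - (∑ i, ∑ j, Lh i j * x j ^ 2) := by
          simp only [Finset.sum_sub_distrib, ← Finset.mul_sum]
      _ = 2 * (x ⬝ᵥ Lh.mulVec x) := by rw [hA, hB, hC]; ring
  have hterm : ∀ (x : Fin N → ℝ) (i j), 0 ≤ (-(Lh i j)) * (x i - x j) ^ 2 := by
    intro x i j
    by_cases hij : i = j
    · subst hij; simp
    · have := hoff i j hij
      exact mul_nonneg (by linarith) (sq_nonneg _)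
  have hpsd : Lh.PosSemidef := by
    refine Matrix.PosSemidef.of_dotProduct_mulVec_nonneg ?_ ?_
    · simpa [Matrix.IsHermitian, Matrix.conjTranspose_eq_transpose_of_trivial] using hsym.eq
    · intro x
      have h := hQ x
      have hnn : 0 ≤ ∑ i, ∑ j, (-(Lh i j)) * (x i - x j) ^ 2 :=
        Finset.sum_nonneg fun i _ => Finset.sum_nonneg fun j _ => hterm x i j
      have : 0 ≤ x ⬝ᵥ Lh.mulVec x := by linarith
      simpa using this
  have hker : ∀ x : Fin N → ℝ, Lh.mulVec x = 0 ↔ ∃ c : ℝ, x = fun _ => c := by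
    intro x
    constructor
    · intro hx
      have hsum0 : ∑ i, ∑ j, (-(Lh i j)) * (x i - x j) ^ 2 = 0 := by
        rw [hQ x, hx]
        simp
      have hzero2 : ∀ i j, (-(Lh i j)) * (x i - x j) ^ 2 = 0 := by
        intro i j
        have h1 := (Finset.sum_eq_zero_iff_of_nonneg fun i _ =>
          Finset.sum_nonneg fun j _ => hterm x i j).mp hsum0 i (Finset.mem_univ i)
        exact (Finset.sum_eq_zero_iff_of_nonneg fun j _ => hterm x i j).mp h1 j
          (Finset.mem_univ j)
      have hadj : ∀ i j, 0 < a i j → x i = x j := by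
        intro i j haij
        by_cases hij : i = j
        · rw [hij]
        · have hlt : Lh i j < 0 := by
            rw [hE i j, hLoff i j hij, hLoff j i (Ne.symm hij)]
            nlinarith [hspos i, hspos j, ha j i (Ne.symm hij)]
          have h2 : (x i - x j) ^ 2 = 0 := by
            rcases mul_eq_zero.mp (hzero2 i j) with h | h
            · linarith
            · exact h
          have := pow_eq_zero_iff (n := 2) (by norm_num) |>.mp h2
          linarith
      refine ⟨x ⟨0, hN⟩, funext fun k => ?_⟩
      have hpath := hsc ⟨0, hN⟩ k
      induction hpath with
      | refl => rfl
      | @tail b c hp hrel ih => exact (hadj c b hrel).trans ih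
    · rintro ⟨c, rfl⟩
      funext i
      simp only [Matrix.mulVec, dotProduct, Pi.zero_apply]
      rw [← Finset.sum_mul, hLhrow i, zero_mul]
  exact ⟨s, hspos, hvm, hsym, hoff, hones, hpsd, hker⟩
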